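/- arXiv:1410.3068 — 7 statements merged into one kernel-verified Lean document; each statement's English description precedes it below -/
import Mathlib

section
/- Let γ, ε > 0 with ε < (√2 − 1)γ and define b₁, b₂, b₃, b₄ as in the lossless dual-NOPA system. For real m, n define f(m,n) = 2(b₁ + 2b₂ cos m cos n + b₃ cos 2m)/(b₄ − b₃ cos 2m) − 2(b₁ + 2b₂ + b₃)/(b₄ − b₃). Then f(m,n) ≥ 0 for all m, n, with equality when m = n = 0. -/
set_option maxHeartbeats 1000000 in
theorem stmt3 (γ ε : ℝ) (hγ : 0 < γ) (hε : 0 < ε)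
    (hstab : ε < (Real.sqrt 2 - 1) * γ)
    (b₁ b₂ b₃ b₄ : ℝ)
    (hb₁ : b₁ = ε ^ 8 + 12 * ε ^ 6 * γ ^ 2 - 10 * ε ^ 4 * γ ^ 4 + 12 * ε ^ 2 * γ ^ 6 + γ ^ 8)
    (hb₂ : b₂ = 4 * ε * γ * (ε ^ 2 - γ ^ 2) * (ε ^ 2 + γ ^ 2) ^ 2)
    (hb₃ : b₃ = 8 * ε ^ 2 * γ ^ 2 * (ε ^ 2 - γ ^ 2) ^ 2)
    (hb₄ : b₄ = ε ^ 8 - 4 * ε ^ 6 * γ ^ 2 + 22 * ε ^ 4 * γ ^ 4 - 4 * ε ^ 2 * γ ^ 6 + γ ^ 8)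
    (f : ℝ → ℝ → ℝ)
    (hf : ∀ m n, f m n =
      2 * (b₁ + 2 * b₂ * Real.cos m * Real.cos n + b₃ * Real.cos (2 * m)) /
        (b₄ - b₃ * Real.cos (2 * m)) -
      2 * (b₁ + 2 * b₂ + b₃) / (b₄ - b₃)) :
    (∀ m n, 0 ≤ f m n) ∧ f 0 0 = 0 := by
  have s2 : Real.sqrt 2 * Real.sqrt 2 = 2 := Real.mul_self_sqrt (by norm_num)
  have h1 : ε + γ < Real.sqrt 2 * γ := by nlinarith [hstab]
  have hpos : 0 < Real.sqrt 2 * γ + (ε + γ) := by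
    have : 0 < Real.sqrt 2 := Real.sqrt_pos.mpr (by norm_num)
    nlinarith
  have h2 : (ε + γ) ^ 2 < 2 * γ ^ 2 := by
    nlinarith [mul_pos (sub_pos.mpr h1) hpos, s2]
  have hA : ε ^ 2 + 2 * ε * γ - γ ^ 2 < 0 := by nlinarith
  have heγ : ε < γ := by nlinarith [mul_pos hε hγ]
  have hA2 : ε ^ 2 - 2 * ε * γ - γ ^ 2 < 0 := by nlinarith [mul_pos hε hγ]
  have hQ : 0 < γ ^ 4 - 6 * ε ^ 2 * γ ^ 2 + ε ^ 4 := by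
    nlinarith [mul_pos (neg_pos.mpr hA) (neg_pos.mpr hA2)]
  have hD0 : 0 < b₄ - b₃ := by
    rw [hb₃, hb₄]
    nlinarith [mul_pos hQ hQ]
  have hb₃nn : 0 ≤ b₃ := by rw [hb₃]; positivity
  have hD : ∀ m : ℝ, 0 < b₄ - b₃ * Real.cos (2 * m) := by
    intro m
    have hc1 : Real.cos (2 * m) ≤ 1 := Real.cos_le_one _
    nlinarith [mul_nonneg hb₃nn (sub_nonneg.mpr hc1)]
  have hc : 0 < ε * γ * (γ ^ 2 - ε ^ 2) * (ε ^ 2 + γ ^ 2) ^ 2 := by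
    have : 0 < γ ^ 2 - ε ^ 2 := by nlinarith
    positivity
  constructor
  · intro m n
    rw [hf, sub_nonneg, div_le_div_iff₀ hD0 (hD m)]
    rw [Real.cos_two_mul m]
    set x := Real.cos m with hxdef
    set y := Real.cos n with hydef
    have hx2 : x ^ 2 ≤ 1 := Real.cos_sq_le_one m
    have hy2 : y ^ 2 ≤ 1 := Real.cos_sq_le_one n
    rw [hb₁, hb₂, hb₃, hb₄]
    linarith [mul_nonneg (mul_nonneg hc.le (sub_nonneg.mpr hx2))
        (by positivity : (0:ℝ) ≤ (ε ^ 2 + 2 * ε * γ - γ ^ 2) ^ 4),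
      mul_nonneg (mul_nonneg hc.le
        (by nlinarith [sq_nonneg (x - y)] : (0:ℝ) ≤ (x - y) ^ 2 + (1 - y ^ 2)))
        (sq_nonneg (γ ^ 4 - 6 * ε ^ 2 * γ ^ 2 + ε ^ 4))]
  · rw [hf]
    norm_num
end

section
/- Let γ, ε > 0 with ε < (√2 − 1)γ and define b₁, b₂, b₃, b₄ as in the lossless dual-NOPA system. Define V(m) = 2(b₁ + 2b₂ cos m + b₃ cos 2m)/(b₄ − b₃ cos 2m) for m ∈ (−π/2, π/2). Then V(m) ≥ V(0) = 2(b₁ + 2b₂ + b₃)/(b₄ − b₃) and V(m) ≤ 2 for all m ∈ (−π/2, π/2), with V(m) → 2 as m → ±π/2. -/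
set_option maxHeartbeats 1000000 in
open Real Filter Set in
theorem stmt5 (γ ε : ℝ) (hγ : 0 < γ) (hε : 0 < ε)
    (hstab : ε < (Real.sqrt 2 - 1) * γ)
    (b₁ b₂ b₃ b₄ : ℝ)
    (hb₁ : b₁ = ε ^ 8 + 12 * ε ^ 6 * γ ^ 2 - 10 * ε ^ 4 * γ ^ 4 + 12 * ε ^ 2 * γ ^ 6 + γ ^ 8)
    (hb₂ : b₂ = 4 * ε * γ * (ε ^ 2 - γ ^ 2) * (ε ^ 2 + γ ^ 2) ^ 2)
    (hb₃ : b₃ = 8 * ε ^ 2 * γ ^ 2 * (ε ^ 2 - γ ^ 2) ^ 2)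
    (hb₄ : b₄ = ε ^ 8 - 4 * ε ^ 6 * γ ^ 2 + 22 * ε ^ 4 * γ ^ 4 - 4 * ε ^ 2 * γ ^ 6 + γ ^ 8)
    (V : ℝ → ℝ)
    (hV : ∀ m, V m =
      2 * (b₁ + 2 * b₂ * Real.cos m + b₃ * Real.cos (2 * m)) /
        (b₄ - b₃ * Real.cos (2 * m))) :
    (∀ m ∈ Ioo (-(π / 2)) (π / 2), V 0 ≤ V m) ∧
    V 0 = 2 * (b₁ + 2 * b₂ + b₃) / (b₄ - b₃) ∧
    (∀ m ∈ Ioo (-(π / 2)) (π / 2), V m ≤ 2) ∧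
    Tendsto V (nhdsWithin (π / 2) (Iio (π / 2))) (nhds 2) ∧
    Tendsto V (nhdsWithin (-(π / 2)) (Ioi (-(π / 2)))) (nhds 2) := by
  -- stability : γ² - ε² - 2εγ > 0
  have hs : 0 < γ ^ 2 - ε ^ 2 - 2 * ε * γ := by
    have h1 : ε + γ < Real.sqrt 2 * γ := by nlinarith
    have h2 : (ε + γ) * (ε + γ) < (Real.sqrt 2 * γ) * (Real.sqrt 2 * γ) :=
      mul_self_lt_mul_self (by positivity) h1
    have h3 : Real.sqrt 2 * Real.sqrt 2 = 2 := Real.mul_self_sqrt (by norm_num)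
    nlinarith [h2, h3]
  have hq2 : 0 < γ ^ 2 - ε ^ 2 := by nlinarith
  have hst : 0 < ε ^ 4 - 6 * ε ^ 2 * γ ^ 2 + γ ^ 4 := by
    nlinarith [mul_pos hs (show 0 < γ ^ 2 - ε ^ 2 + 2 * ε * γ by nlinarith)]
  have hdb : b₄ - b₃ = (ε ^ 4 - 6 * ε ^ 2 * γ ^ 2 + γ ^ 4) ^ 2 := by rw [hb₃, hb₄]; ring
  have hDb : 0 < b₄ - b₃ := by rw [hdb]; positivity
  have hb3 : 0 ≤ b₃ := by rw [hb₃]; positivity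
  have hD : ∀ m : ℝ, 0 < b₄ - b₃ * Real.cos (2 * m) := by
    intro m
    nlinarith [mul_le_mul_of_nonneg_left (Real.cos_le_one (2 * m)) hb3]
  have hV0 : V 0 = 2 * (b₁ + 2 * b₂ + b₃) / (b₄ - b₃) := by
    rw [hV 0]; norm_num
  have hb43 : b₄ + b₃ = (ε ^ 2 + γ ^ 2) ^ 4 := by rw [hb₃, hb₄]; ring
  have hDb' : 0 < b₄ + b₃ := by rw [hb43]; positivity
  -- value at points where cos = 0
  have hval : ∀ a : ℝ, Real.cos a = 0 → V a = 2 := by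
    intro a ha
    rw [hV a, Real.cos_two_mul, ha]
    rw [show b₁ + 2 * b₂ * 0 + b₃ * (2 * 0 ^ 2 - 1) = b₄ + b₃ by
      rw [hb₁, hb₃, hb₄]; ring]
    rw [show b₄ - b₃ * (2 * 0 ^ 2 - 1) = b₄ + b₃ by ring]
    rw [mul_div_assoc, div_self hDb'.ne', mul_one]
  -- continuity of V
  have hVeq : V = fun m => 2 * (b₁ + 2 * b₂ * Real.cos m + b₃ * Real.cos (2 * m)) /
      (b₄ - b₃ * Real.cos (2 * m)) := funext hV
  have hcont : Continuous V := by
    rw [hVeq]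
    exact Continuous.div (by fun_prop) (by fun_prop) fun x => (hD x).ne'
  refine ⟨?_, hV0, ?_, ?_, ?_⟩
  · -- V 0 ≤ V m
    intro m hm
    have hc : 0 < Real.cos m := Real.cos_pos_of_mem_Ioo hm
    have hc1 : Real.cos m ≤ 1 := Real.cos_le_one m
    rw [hV0, hV m, Real.cos_two_mul m]
    rw [div_le_div_iff₀ hDb (by
      have := hD m; rwa [Real.cos_two_mul m] at this)]
    set c := Real.cos m with hcdef
    have hbr : 0 ≤ (γ ^ 2 - ε ^ 2 - 2 * ε * γ) ^ 2 + 4 * ε * γ * (γ ^ 2 - ε ^ 2) * (1 - c) := by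
      have h1 : 0 ≤ 4 * ε * γ * (γ ^ 2 - ε ^ 2) * (1 - c) := by
        apply mul_nonneg (by nlinarith [mul_pos (mul_pos hε hγ) hq2]) (by linarith)
      nlinarith [sq_nonneg (γ ^ 2 - ε ^ 2 - 2 * ε * γ)]
    have hA : 0 ≤ 8 * ε * γ * (γ ^ 2 - ε ^ 2) * (ε ^ 2 + γ ^ 2) ^ 2 *
        (γ ^ 2 - ε ^ 2 - 2 * ε * γ) ^ 2 * (1 - c) := by
      apply mul_nonneg (mul_nonneg _ (sq_nonneg _)) (by linarith)
      nlinarith [mul_pos (mul_pos (mul_pos hε hγ) hq2) (pow_pos (show (0:ℝ) < ε ^ 2 + γ ^ 2 by positivity) 2)]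
    have key : 2 * (b₁ + 2 * b₂ * c + b₃ * (2 * c ^ 2 - 1)) * (b₄ - b₃) -
        2 * (b₁ + 2 * b₂ + b₃) * (b₄ - b₃ * (2 * c ^ 2 - 1)) =
        2 * ((8 * ε * γ * (γ ^ 2 - ε ^ 2) * (ε ^ 2 + γ ^ 2) ^ 2 *
          (γ ^ 2 - ε ^ 2 - 2 * ε * γ) ^ 2 * (1 - c)) *
          ((γ ^ 2 - ε ^ 2 - 2 * ε * γ) ^ 2 + 4 * ε * γ * (γ ^ 2 - ε ^ 2) * (1 - c))) := by
      rw [hb₁, hb₂, hb₃, hb₄]; ring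
    linarith [mul_nonneg hA hbr, key]
  · -- V m ≤ 2
    intro m hm
    have hc : 0 < Real.cos m := Real.cos_pos_of_mem_Ioo hm
    have hc1 : Real.cos m ≤ 1 := Real.cos_le_one m
    rw [hV m]
    rw [div_le_iff₀ (hD m), Real.cos_two_mul m]
    set c := Real.cos m with hcdef
    have hbr : 0 ≤ (γ ^ 2 - ε ^ 2 - 2 * ε * γ) ^ 2 + 4 * ε * γ * (γ ^ 2 - ε ^ 2) * (1 - c) := by
      have h1 : 0 ≤ 4 * ε * γ * (γ ^ 2 - ε ^ 2) * (1 - c) := by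
        apply mul_nonneg (by nlinarith [mul_pos (mul_pos hε hγ) hq2]) (by linarith)
      nlinarith [sq_nonneg (γ ^ 2 - ε ^ 2 - 2 * ε * γ)]
    have hA : 0 ≤ 8 * ε * γ * c * (γ ^ 2 - ε ^ 2) := by
      nlinarith [mul_pos (mul_pos (mul_pos hε hγ) hc) hq2]
    have key : 2 * (b₄ - b₃ * (2 * c ^ 2 - 1)) -
        2 * (b₁ + 2 * b₂ * c + b₃ * (2 * c ^ 2 - 1)) =
        2 * ((8 * ε * γ * c * (γ ^ 2 - ε ^ 2)) *
          ((γ ^ 2 - ε ^ 2 - 2 * ε * γ) ^ 2 + 4 * ε * γ * (γ ^ 2 - ε ^ 2) * (1 - c))) := by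
      rw [hb₁, hb₂, hb₃, hb₄]; ring
    linarith [mul_nonneg hA hbr, key]
  · have h := (hcont.tendsto (π / 2)).mono_left
      (nhdsWithin_le_nhds (s := Iio (π / 2)))
    rwa [hval (π / 2) (Real.cos_pi_div_two)] at h
  · have h := (hcont.tendsto (-(π / 2))).mono_left
      (nhdsWithin_le_nhds (s := Ioi (-(π / 2))))
    have : Real.cos (-(π / 2)) = 0 := by rw [Real.cos_neg, Real.cos_pi_div_two]
    rwa [hval _ this] at h
end

section
/- Let γ > 0, κ ≥ 0, ε > 0, 0 < α ≤ 1 with ε < γ and κ² < ε² + γ². Define c₂ = 4αεγ(−κ² + ε² + γ²)(−κ⁴ − 4κ³γ − 6κ²γ² + 4α²κε²γ + ε⁴ − 4κγ³ − γ⁴). Then c₂ < 0. Equivalently, c₂ = 4αεγ·d₁·d₂ with d₁ = ε² + γ² − κ² > 0 and d₂ = ε⁴ − γ⁴ − 4κγ(γ² − α²ε²) − 6κ²γ² − 4κ³γ − κ⁴ < 0. -/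
theorem stmt9 (γ κ ε α : ℝ) (hγ : 0 < γ) (hκ : 0 ≤ κ) (hε : 0 < ε)
    (hα₁ : 0 < α) (hα₂ : α ≤ 1) (hεγ : ε < γ) (hκ' : κ ^ 2 < ε ^ 2 + γ ^ 2)
    (c₂ d₁ d₂ : ℝ)
    (hc₂ : c₂ = 4 * α * ε * γ * (-κ ^ 2 + ε ^ 2 + γ ^ 2) *
      (-κ ^ 4 - 4 * κ ^ 3 * γ - 6 * κ ^ 2 * γ ^ 2 + 4 * α ^ 2 * κ * ε ^ 2 * γ
        + ε ^ 4 - 4 * κ * γ ^ 3 - γ ^ 4))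
    (hd₁ : d₁ = ε ^ 2 + γ ^ 2 - κ ^ 2)
    (hd₂ : d₂ = ε ^ 4 - γ ^ 4 - 4 * κ * γ * (γ ^ 2 - α ^ 2 * ε ^ 2)
      - 6 * κ ^ 2 * γ ^ 2 - 4 * κ ^ 3 * γ - κ ^ 4) :
    c₂ < 0 ∧ c₂ = 4 * α * ε * γ * d₁ * d₂ ∧ 0 < d₁ ∧ d₂ < 0 := by
  have hd₁' : 0 < d₁ := by rw [hd₁]; linarith
  have hα2 : α ^ 2 ≤ 1 := by nlinarith
  have hε2 : ε ^ 2 < γ ^ 2 := by nlinarith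
  have hαε : α ^ 2 * ε ^ 2 < γ ^ 2 := by nlinarith [sq_nonneg ε]
  have hε4 : ε ^ 4 < γ ^ 4 := by nlinarith [sq_nonneg ε, sq_nonneg γ]
  have hd₂' : d₂ < 0 := by
    rw [hd₂]
    have h1 : 0 ≤ 4 * κ * γ * (γ ^ 2 - α ^ 2 * ε ^ 2) := by
      apply mul_nonneg (by positivity) (by linarith)
    nlinarith [sq_nonneg κ, sq_nonneg (κ * γ), sq_nonneg (κ ^ 2), mul_nonneg hκ hγ.le]
  have heq : c₂ = 4 * α * ε * γ * d₁ * d₂ := by rw [hc₂, hd₁, hd₂]; ring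
  have hpos : 0 < 4 * α * ε * γ := by positivity
  refine ⟨?_, heq, hd₁', hd₂'⟩
  rw [heq]
  exact mul_neg_of_pos_of_neg (by positivity) hd₂'
end

section
/- Let γ > 0, κ ≥ 0, ε > 0, 0 < α ≤ 1 with ε ≤ γ. Define c₁, c₃, c₄, c₅ as in the lossy dual-NOPA system and d₃ = (κ² + γ² − ε²)² + 4κ²γ² + 4α²ε²γ² + 4κ³γ + 4κγ(γ² − ε²). Then (c₁ − c₃) − (c₄ + c₅) = 8ε²γ((1 + α²)κ + (1 − α²)γ)·d₃. Consequently, if κ > 0 or α < 1, then c₁ − c₃ > c₄ + c₅, i.e., 2(c₁ − c₃)/(c₄ + c₅) > 2. -/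
theorem stmt10 (γ κ ε α : ℝ) (hγ : 0 < γ) (hκ : 0 ≤ κ) (hε : 0 < ε)
    (hα₁ : 0 < α) (hα₂ : α ≤ 1) (hεγ : ε ≤ γ)
    (c₁ c₃ c₄ c₅ d₃ : ℝ)
    (hc₁ : c₁ = 4 * α ^ 4 * ε ^ 2 * γ ^ 2 *
        (κ ^ 4 + 8 * κ * ε ^ 2 * γ + (ε ^ 2 - γ ^ 2) ^ 2 - 2 * κ ^ 2 * (ε ^ 2 + γ ^ 2))
      + α ^ 2 * (-κ ^ 2 + ε ^ 2 + γ ^ 2) ^ 2 *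
        (κ ^ 4 + 4 * κ ^ 3 * γ - 2 * κ ^ 2 * (ε ^ 2 - 3 * γ ^ 2)
          + 4 * κ * γ * (ε ^ 2 + γ ^ 2) + ε ^ 4
          + 2 * (1 + 2 * (1 - α ^ 2)) * ε ^ 2 * γ ^ 2 + γ ^ 4)
      + (κ ^ 2 - ε ^ 2 + 2 * κ * γ + γ ^ 2) ^ 2 *
        (4 * γ * (κ + γ) * (κ ^ 2 + ε ^ 2 + κ * γ)
          + (1 - α ^ 2) * (-κ ^ 2 + ε ^ 2 + γ ^ 2) ^ 2))
    (hc₃ : c₃ = 8 * α ^ 2 * ε ^ 2 * γ ^ 2 * (-κ + ε - γ) * (κ + ε + γ) *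
      (3 * κ ^ 2 + 2 * κ * γ + ε ^ 2 - γ ^ 2))
    (hc₄ : c₄ = κ ^ 8 + 8 * κ ^ 7 * γ - 4 * κ ^ 6 * (ε ^ 2 - 7 * γ ^ 2)
      - 8 * κ ^ 5 * (3 * ε ^ 2 * γ - 7 * γ ^ 3)
      + κ ^ 4 * (6 * ε ^ 4 - 60 * ε ^ 2 * γ ^ 2 + 70 * γ ^ 4)
      + 8 * κ ^ 3 * (3 * ε ^ 4 * γ - 10 * ε ^ 2 * γ ^ 3 + 7 * γ ^ 5)
      - 4 * κ ^ 2 * (ε ^ 2 - 7 * γ ^ 2) * (ε ^ 2 - γ ^ 2) ^ 2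
      + 8 * κ * γ * (-ε ^ 2 + γ ^ 2) ^ 3
      + ε ^ 8 - 4 * ε ^ 6 * γ ^ 2 + 2 * (3 + 8 * α ^ 4) * ε ^ 4 * γ ^ 4
      - 4 * ε ^ 2 * γ ^ 6 + γ ^ 8)
    (hc₅ : c₅ = 8 * α ^ 2 * ε ^ 2 * γ ^ 2 * (κ ^ 2 + 2 * κ * γ - ε ^ 2 + γ ^ 2) ^ 2)
    (hd₃ : d₃ = (κ ^ 2 + γ ^ 2 - ε ^ 2) ^ 2 + 4 * κ ^ 2 * γ ^ 2 + 4 * α ^ 2 * ε ^ 2 * γ ^ 2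
      + 4 * κ ^ 3 * γ + 4 * κ * γ * (γ ^ 2 - ε ^ 2)) :
    (c₁ - c₃) - (c₄ + c₅) =
      8 * ε ^ 2 * γ * ((1 + α ^ 2) * κ + (1 - α ^ 2) * γ) * d₃ ∧
    ((0 < κ ∨ α < 1) → c₄ + c₅ < c₁ - c₃ ∧ 2 < 2 * (c₁ - c₃) / (c₄ + c₅)) := by

  have key : (c₁ - c₃) - (c₄ + c₅) =
      8 * ε ^ 2 * γ * ((1 + α ^ 2) * κ + (1 - α ^ 2) * γ) * d₃ := by
    subst hc₁ hc₃ hc₄ hc₅ hd₃; ring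
  have hden : 0 < c₄ + c₅ := by
    have h5 : c₄ + c₅ = (((κ + γ) ^ 2 - ε ^ 2) ^ 2 + 4 * α ^ 2 * ε ^ 2 * γ ^ 2) ^ 2 := by
      subst hc₄ hc₅; ring
    rw [h5]; positivity
  refine ⟨key, fun h => ?_⟩
  have hd : 0 < d₃ := by
    rw [hd₃]
    clear hc₁ hc₃ hc₄ hc₅ hd₃ key hden
    have h1 : (0:ℝ) ≤ (κ ^ 2 + γ ^ 2 - ε ^ 2) ^ 2 := sq_nonneg _
    have h2 : (0:ℝ) < 4 * α ^ 2 * ε ^ 2 * γ ^ 2 := by positivity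
    have h3 : (0:ℝ) ≤ 4 * κ ^ 2 * γ ^ 2 := by positivity
    have h4 : (0:ℝ) ≤ 4 * κ ^ 3 * γ := by positivity
    have h5 : (0:ℝ) ≤ 4 * κ * γ * (γ ^ 2 - ε ^ 2) := by
      apply mul_nonneg (by positivity)
      nlinarith
    linarith
  clear hc₁ hc₃ hc₄ hc₅ hd₃
  have hf : 0 < (1 + α ^ 2) * κ + (1 - α ^ 2) * γ := by
    rcases h with h | h
    · have h2 : α ^ 2 ≤ 1 := by nlinarith
      have := mul_nonneg (by linarith : (0:ℝ) ≤ 1 - α ^ 2) hγ.le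
      nlinarith
    · have h2 : α ^ 2 < 1 := by nlinarith
      have := mul_pos (by linarith : (0:ℝ) < 1 - α ^ 2) hγ
      nlinarith
  have hpos : 0 < 8 * ε ^ 2 * γ * ((1 + α ^ 2) * κ + (1 - α ^ 2) * γ) * d₃ := by positivity
  have hlt : c₄ + c₅ < c₁ - c₃ := by linarith [key, hpos]
  refine ⟨hlt, ?_⟩
  rw [lt_div_iff₀ hden]
  linarith
end

section
/- Let γ, ε > 0 with ε < (√2 − 1)γ and b₁, b₂, b₃, b₄ as in the lossless dual-NOPA system. The stationary points of f(m,n) = 2(b₁ + 2b₂ cos m cos n + b₃ cos 2m)/(b₄ − b₃ cos 2m) on the torus ℝ²/(2πℤ)² are exactly the points with (sin m = 0 and sin n = 0) or (cos m = 0 and cos n = 0), and the global minimum of f is attained at (m,n) = (0,0) and (m,n) = (π,π) with value 2(b₁ + 2b₂ + b₃)/(b₄ − b₃). -/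
set_option maxHeartbeats 2000000 in
theorem stmt12 (γ ε : ℝ) (hγ : 0 < γ) (hε : 0 < ε)
    (hstab : ε < (Real.sqrt 2 - 1) * γ)
    (b₁ b₂ b₃ b₄ : ℝ)
    (hb₁ : b₁ = ε ^ 8 + 12 * ε ^ 6 * γ ^ 2 - 10 * ε ^ 4 * γ ^ 4 + 12 * ε ^ 2 * γ ^ 6 + γ ^ 8)
    (hb₂ : b₂ = 4 * ε * γ * (ε ^ 2 - γ ^ 2) * (ε ^ 2 + γ ^ 2) ^ 2)
    (hb₃ : b₃ = 8 * ε ^ 2 * γ ^ 2 * (ε ^ 2 - γ ^ 2) ^ 2)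
    (hb₄ : b₄ = ε ^ 8 - 4 * ε ^ 6 * γ ^ 2 + 22 * ε ^ 4 * γ ^ 4 - 4 * ε ^ 2 * γ ^ 6 + γ ^ 8)
    (f : ℝ → ℝ → ℝ)
    (hf : ∀ m n, f m n =
      2 * (b₁ + 2 * b₂ * Real.cos m * Real.cos n + b₃ * Real.cos (2 * m)) /
        (b₄ - b₃ * Real.cos (2 * m))) :
    (∀ m n : ℝ,
      (deriv (fun m' => f m' n) m = 0 ∧ deriv (fun n' => f m n') n = 0) ↔
      ((Real.sin m = 0 ∧ Real.sin n = 0) ∨ (Real.cos m = 0 ∧ Real.cos n = 0))) ∧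
    (∀ m n : ℝ, f 0 0 ≤ f m n) ∧
    f 0 0 = 2 * (b₁ + 2 * b₂ + b₃) / (b₄ - b₃) ∧
    f Real.pi Real.pi = 2 * (b₁ + 2 * b₂ + b₃) / (b₄ - b₃) := by
  have hs2 : Real.sqrt 2 ^ 2 = 2 := Real.sq_sqrt (by norm_num)
  have hs1 : (1:ℝ) < Real.sqrt 2 := by nlinarith [Real.sqrt_nonneg 2]
  have hεγ : ε < γ := by nlinarith [Real.sqrt_nonneg 2]
  have hp1 : 0 < (Real.sqrt 2 - 1) * γ - ε := sub_pos.mpr hstab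
  have hp2 : 0 < (Real.sqrt 2 - 1) * γ + ε :=
    add_pos (mul_pos (by linarith) hγ) hε
  have hK : 0 < γ ^ 2 - 2 * ε * γ - ε ^ 2 := by
    nlinarith [mul_pos hp1 hp2, mul_pos hp1 hγ]
  have hK' : 0 < γ ^ 2 + 2 * ε * γ - ε ^ 2 := by nlinarith [mul_pos hε hγ]
  have hge : 0 < γ ^ 2 - ε ^ 2 := by nlinarith
  have hcore : 0 < ε ^ 4 - 6 * ε ^ 2 * γ ^ 2 + γ ^ 4 := by nlinarith [mul_pos hK hK']
  have hb2neg : b₂ < 0 := by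
    rw [hb₂]
    nlinarith [mul_pos (mul_pos (mul_pos (mul_pos (show (0:ℝ) < 4 by norm_num) hε) hγ) hge)
      (pow_pos (show (0:ℝ) < ε ^ 2 + γ ^ 2 by positivity) 2)]
  have hb3pos : 0 < b₃ := by
    rw [hb₃]
    nlinarith [mul_pos (mul_pos (pow_pos hε 2) (pow_pos hγ 2)) (pow_pos hge 2)]
  have hD0 : 0 < b₄ - b₃ := by
    rw [hb₃, hb₄]; nlinarith [pow_pos hcore 2]
  have hBsum : b₁ + b₄ = 2 * (ε ^ 2 + γ ^ 2) ^ 4 := by rw [hb₁, hb₄]; ring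
  have hsum4 : 0 < b₄ + b₃ := by
    have h : b₄ + b₃ = (ε ^ 2 + γ ^ 2) ^ 4 := by rw [hb₃, hb₄]; ring
    rw [h]; positivity
  have hBpos : 0 < b₁ + b₄ := by rw [hBsum]; positivity
  have h2b2pos : 0 < b₁ + b₄ + 2 * b₂ := by
    have heq : b₁ + b₄ + 2 * b₂ = 2 * (ε ^ 2 + γ ^ 2) ^ 2 * (γ ^ 2 - 2 * ε * γ - ε ^ 2) ^ 2 := by
      rw [hb₁, hb₂, hb₄]; ring
    rw [heq]
    exact mul_pos (by positivity) (pow_pos hK 2)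
  have hId : 2 * b₂ ^ 2 * (b₄ + b₃) = b₃ * (b₁ + b₄) ^ 2 := by
    rw [hb₁, hb₂, hb₃, hb₄]; ring
  have hb2ne : b₂ ≠ 0 := ne_of_lt hb2neg
  have hb3ne : b₃ ≠ 0 := ne_of_gt hb3pos
  have hDpos : ∀ x : ℝ, 0 < b₄ + b₃ - 2 * b₃ * Real.cos x ^ 2 := by
    intro x
    nlinarith [mul_nonneg hb3pos.le (sub_nonneg.mpr (Real.cos_sq_le_one x))]
  have hDne : ∀ x : ℝ, b₄ - b₃ * Real.cos (2 * x) ≠ 0 := by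
    intro x
    have h2 : b₄ - b₃ * Real.cos (2 * x) = b₄ + b₃ - 2 * b₃ * Real.cos x ^ 2 := by
      rw [Real.cos_two_mul]; ring
    rw [h2]; exact (hDpos x).ne'
  have hc2 : ∀ x : ℝ, HasDerivAt (fun y : ℝ => Real.cos (2 * y)) (-2 * Real.sin (2 * x)) x := by
    intro x
    have hg : HasDerivAt (fun y : ℝ => 2 * y) 2 x := by
      simpa using (hasDerivAt_id x).const_mul 2
    have h := (Real.hasDerivAt_cos (2 * x)).comp x hg
    rw [show -2 * Real.sin (2 * x) = -Real.sin (2 * x) * 2 by ring]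
    exact h
  have hderiv_m : ∀ m n : ℝ, deriv (fun m' => f m' n) m =
      (-4 * Real.sin m * (b₂ * Real.cos n * (b₄ + b₃ - 2 * b₃ * Real.cos m ^ 2) +
        2 * b₃ * Real.cos m * (b₁ + b₄ + 2 * b₂ * Real.cos m * Real.cos n))) /
      (b₄ + b₃ - 2 * b₃ * Real.cos m ^ 2) ^ 2 := by
    intro m n
    have hfun : (fun m' => f m' n) = fun m' =>
        2 * (b₁ + 2 * b₂ * Real.cos m' * Real.cos n + b₃ * Real.cos (2 * m')) /
          (b₄ - b₃ * Real.cos (2 * m')) := funext fun m' => hf m' n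
    have h1 : HasDerivAt (fun y => 2 * b₂ * Real.cos y * Real.cos n)
        (2 * b₂ * -Real.sin m * Real.cos n) m :=
      ((Real.hasDerivAt_cos m).const_mul (2 * b₂)).mul_const _
    have h2 : HasDerivAt (fun y => b₃ * Real.cos (2 * y)) (b₃ * (-2 * Real.sin (2 * m))) m :=
      (hc2 m).const_mul b₃
    have hu := (((hasDerivAt_const m b₁).add h1).add h2).const_mul 2
    have hv := (hasDerivAt_const m b₄).sub h2
    have hq := hu.div hv (hDne m)
    simp only [Pi.add_apply, Pi.sub_apply, Pi.div_def] at hq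
    rw [hfun, hq.deriv, Real.cos_two_mul, Real.sin_two_mul]
    ring
  have hderiv_n : ∀ m n : ℝ, deriv (fun n' => f m n') n =
      (-4 * b₂ * Real.cos m * Real.sin n) / (b₄ + b₃ - 2 * b₃ * Real.cos m ^ 2) := by
    intro m n
    have hfun : (fun n' => f m n') = fun n' =>
        2 * (b₁ + 2 * b₂ * Real.cos m * Real.cos n' + b₃ * Real.cos (2 * m)) /
          (b₄ - b₃ * Real.cos (2 * m)) := funext fun n' => hf m n'
    have h1 : HasDerivAt (fun y => 2 * b₂ * Real.cos m * Real.cos y)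
        (2 * b₂ * Real.cos m * -Real.sin n) n :=
      (Real.hasDerivAt_cos n).const_mul (2 * b₂ * Real.cos m)
    have hu := (((hasDerivAt_const n b₁).add h1).add
      (hasDerivAt_const n (b₃ * Real.cos (2 * m)))).const_mul 2
    have hq := hu.div_const (b₄ - b₃ * Real.cos (2 * m))
    simp only [Pi.add_apply, Pi.sub_apply] at hq
    rw [hfun, hq.deriv, Real.cos_two_mul]
    have hne : b₄ + b₃ - 2 * b₃ * Real.cos m ^ 2 ≠ 0 := (hDpos m).ne'
    have hne1 : b₄ - b₃ * (2 * Real.cos m ^ 2 - 1) ≠ 0 := by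
      rw [show b₄ - b₃ * (2 * Real.cos m ^ 2 - 1) = b₄ + b₃ - 2 * b₃ * Real.cos m ^ 2 from by ring]
      exact hne
    rw [div_eq_div_iff hne1 hne]
    ring
  have hmin_core : ∀ v : ℝ, 0 ≤ v → v ≤ 1 →
      (b₁ + 2 * b₂ + b₃) * (b₄ + b₃ - 2 * b₃ * v ^ 2) ≤
        (b₁ + 2 * b₂ * v + b₃ * (2 * v ^ 2 - 1)) * (b₄ - b₃) := by
    intro v h0 h1
    have hfac : (b₁ + 2 * b₂ * v + b₃ * (2 * v ^ 2 - 1)) * (b₄ - b₃) -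
        (b₁ + 2 * b₂ + b₃) * (b₄ + b₃ - 2 * b₃ * v ^ 2) =
        4 * (1 - v) * (γ ^ 2 - 2 * ε * γ - ε ^ 2) ^ 2 * (ε ^ 2 + γ ^ 2) ^ 2 *
          (2 * ε * γ * (γ ^ 2 - ε ^ 2) * (ε ^ 2 + γ ^ 2) ^ 2 -
            8 * ε ^ 2 * γ ^ 2 * (γ ^ 2 - ε ^ 2) ^ 2 * v) := by
      rw [hb₁, hb₂, hb₃, hb₄]; ring
    have hA : 0 ≤ ε * γ * (γ ^ 2 - ε ^ 2) * (γ ^ 2 - 2 * ε * γ - ε ^ 2) ^ 2 :=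
      mul_nonneg (mul_nonneg (mul_nonneg hε.le hγ.le) hge.le) (sq_nonneg _)
    have hB : 0 ≤ ε ^ 2 * γ ^ 2 * (γ ^ 2 - ε ^ 2) ^ 2 * (1 - v) :=
      mul_nonneg (by positivity) (by linarith)
    have hpos : 0 ≤ 2 * ε * γ * (γ ^ 2 - ε ^ 2) * (ε ^ 2 + γ ^ 2) ^ 2 -
        8 * ε ^ 2 * γ ^ 2 * (γ ^ 2 - ε ^ 2) ^ 2 * v := by nlinarith [hA, hB]
    have h4 : 0 ≤ 4 * (1 - v) * (γ ^ 2 - 2 * ε * γ - ε ^ 2) ^ 2 * (ε ^ 2 + γ ^ 2) ^ 2 :=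
      mul_nonneg (mul_nonneg (by linarith) (sq_nonneg _)) (sq_nonneg _)
    nlinarith [mul_nonneg h4 hpos, hfac]
  have hf00 : f 0 0 = 2 * (b₁ + 2 * b₂ + b₃) / (b₄ - b₃) := by
    rw [hf]; norm_num
  refine ⟨?_, ?_, hf00, ?_⟩
  · -- critical points
    intro m n
    have dp := hDpos m
    have dpn : b₄ + b₃ - 2 * b₃ * Real.cos m ^ 2 ≠ 0 := dp.ne'
    have hiff1 : deriv (fun m' => f m' n) m = 0 ↔
        Real.sin m * (b₂ * Real.cos n * (b₄ + b₃ - 2 * b₃ * Real.cos m ^ 2) +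
          2 * b₃ * Real.cos m * (b₁ + b₄ + 2 * b₂ * Real.cos m * Real.cos n)) = 0 := by
      rw [hderiv_m m n, div_eq_zero_iff]
      constructor
      · rintro (h | h)
        · linear_combination (-1/4 : ℝ) * h
        · exact absurd h (pow_ne_zero 2 dpn)
      · intro h; left; linear_combination (-4 : ℝ) * h
    have hiff2 : deriv (fun n' => f m n') n = 0 ↔ Real.cos m * Real.sin n = 0 := by
      rw [hderiv_n m n, div_eq_zero_iff]
      constructor
      · rintro (h | h)
        · have h' : b₂ * (Real.cos m * Real.sin n) = 0 := by linear_combination (-1/4 : ℝ) * h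
          rcases mul_eq_zero.mp h' with h'' | h''
          · exact absurd h'' hb2ne
          · exact h''
        · exact absurd h dpn
      · intro h; left; linear_combination (-4 * b₂) * h
    rw [hiff1, hiff2]
    constructor
    · rintro ⟨h1, h2⟩
      rcases mul_eq_zero.mp h2 with hcm | hsn
      · right
        refine ⟨hcm, ?_⟩
        rcases mul_eq_zero.mp h1 with hsm | hB
        · exfalso
          have hpy := Real.sin_sq_add_cos_sq m
          rw [hsm, hcm] at hpy; norm_num at hpy
        · have h' : Real.cos n * (b₂ * (b₄ + b₃)) = 0 := by
            rw [hcm] at hB; linear_combination hB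
          rcases mul_eq_zero.mp h' with h'' | h''
          · exact h''
          · exact absurd h'' (mul_ne_zero hb2ne hsum4.ne')
      · rcases mul_eq_zero.mp h1 with hsm | hB
        · left; exact ⟨hsm, hsn⟩
        · by_cases hsm : Real.sin m = 0
          · left; exact ⟨hsm, hsn⟩
          · exfalso
            have hcn2 : Real.cos n ^ 2 = 1 := by
              have hpy := Real.sin_sq_add_cos_sq n
              rw [hsn] at hpy; nlinarith [hpy]
            have hcm2 : Real.cos m ^ 2 < 1 := by
              have hpy := Real.sin_sq_add_cos_sq m
              have : 0 < Real.sin m ^ 2 := by positivity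
              linarith
            have hkey : b₃ * (2 * b₂ * Real.cos m + Real.cos n * (b₁ + b₄)) ^ 2 = 0 := by
              linear_combination (2 * Real.cos n * b₂) * hB -
                (4 * b₂ ^ 2 * b₃ * Real.cos m ^ 2) * hcn2 - Real.cos n ^ 2 * hId
            have h5 : (2 * b₂ * Real.cos m + Real.cos n * (b₁ + b₄)) ^ 2 = 0 := by
              rcases mul_eq_zero.mp hkey with h | h
              · exact absurd h hb3ne
              · exact h
            have h6 : 2 * b₂ * Real.cos m + Real.cos n * (b₁ + b₄) = 0 :=
              pow_eq_zero_iff (two_ne_zero) |>.mp h5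
            have h7 : 4 * b₂ ^ 2 * Real.cos m ^ 2 = (b₁ + b₄) ^ 2 := by
              linear_combination (2 * b₂ * Real.cos m - Real.cos n * (b₁ + b₄)) * h6 +
                (b₁ + b₄) ^ 2 * hcn2
            nlinarith [h7, hcm2, mul_pos h2b2pos (show 0 < b₁ + b₄ - 2 * b₂ by linarith),
              mul_nonneg (sq_nonneg b₂) (sub_nonneg.mpr hcm2.le)]
    · rintro (⟨hsm, hsn⟩ | ⟨hcm, hcn⟩)
      · exact ⟨by rw [hsm]; ring, by rw [hsn]; ring⟩
      · exact ⟨by rw [hcm, hcn]; ring, by rw [hcm]; ring⟩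
  · -- minimum
    intro m n
    rw [hf00, hf m n, Real.cos_two_mul]
    have hd2 : 0 < b₄ - b₃ * (2 * Real.cos m ^ 2 - 1) := by
      have := hDpos m; linarith [this]
    rw [div_le_div_iff₀ hD0 hd2]
    have htw : Real.cos m * Real.cos n ≤ |Real.cos m| := by
      calc Real.cos m * Real.cos n ≤ |Real.cos m * Real.cos n| := le_abs_self _
        _ = |Real.cos m| * |Real.cos n| := abs_mul _ _
        _ ≤ |Real.cos m| * 1 := mul_le_mul_of_nonneg_left (Real.abs_cos_le_one n) (abs_nonneg _)
        _ = |Real.cos m| := mul_one _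
    have hmain := hmin_core |Real.cos m| (abs_nonneg _) (Real.abs_cos_le_one m)
    rw [sq_abs] at hmain
    have h8 : 0 ≤ (2 * b₂ * (Real.cos m * Real.cos n) - 2 * b₂ * |Real.cos m|) * (b₄ - b₃) := by
      apply mul_nonneg _ hD0.le
      nlinarith [htw, hb2neg]
    nlinarith [hmain, h8]
  · -- f π π
    rw [hf, Real.cos_pi, Real.cos_two_pi]
    ring
end

section
/- Let γ, κ, ε ≥ 0 with γ > 0 and 0 ≤ α ≤ 1. The real parts of the eigenvalues λ of the 8×8 drift matrix A of the dual-NOPA coherent feedback system satisfy max Re(λ) = −(γ+κ)/2 + (1/2)·(ε²/2 + αεγ|cos(Δθ/2)| + √(ε⁴/4 + α²ε²γ² + αε³γ|cos(Δθ/2)|))^{1/2}, where Δθ = θ₁ − θ₂. In particular, max Re(λ) depends on θ₁, θ₂ only through Δθ. -/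
noncomputable def dualNopaDrift (γ κ ε α θ₁ θ₂ : ℝ) : Matrix (Fin 8) (Fin 8) ℝ :=
  !![-(γ + κ)/2, 0, ε/2, 0, 0, 0, 0, 0;
     0, -(γ + κ)/2, 0, -(ε/2), 0, 0, 0, 0;
     ε/2, 0, -(γ + κ)/2, 0, 0, 0, -(α * γ * Real.cos θ₂), α * γ * Real.sin θ₂;
     0, -(ε/2), 0, -(γ + κ)/2, 0, 0, -(α * γ * Real.sin θ₂), -(α * γ * Real.cos θ₂);
     -(α * γ * Real.cos θ₁), α * γ * Real.sin θ₁, 0, 0, -(γ + κ)/2, 0, ε/2, 0;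
     -(α * γ * Real.sin θ₁), -(α * γ * Real.cos θ₁), 0, 0, 0, -(γ + κ)/2, 0, -(ε/2);
     0, 0, 0, 0, ε/2, 0, -(γ + κ)/2, 0;
     0, 0, 0, 0, 0, -(ε/2), 0, -(γ + κ)/2]

namespace DualNopaAux

open Matrix Complex

variable {αT : Type*} {m : ℕ}

@[simp] lemma cons_val_five (x : αT) (u : Fin (m+5) → αT) :
    Matrix.vecCons x u 5 = Matrix.vecHead (Matrix.vecTail (Matrix.vecTail (Matrix.vecTail (Matrix.vecTail u)))) := rfl
@[simp] lemma cons_val_six (x : αT) (u : Fin (m+6) → αT) :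
    Matrix.vecCons x u 6 = Matrix.vecHead (Matrix.vecTail (Matrix.vecTail (Matrix.vecTail (Matrix.vecTail (Matrix.vecTail u))))) := rfl
@[simp] lemma cons_val_seven (x : αT) (u : Fin (m+7) → αT) :
    Matrix.vecCons x u 7 = Matrix.vecHead (Matrix.vecTail (Matrix.vecTail (Matrix.vecTail (Matrix.vecTail (Matrix.vecTail (Matrix.vecTail u)))))) := rfl

lemma mem_spec {M : Matrix (Fin 8) (Fin 8) ℂ} {μ : ℂ} (v : Fin 8 → ℂ) (hv : v ≠ 0)
    (h : M *ᵥ v = μ • v) : μ ∈ spectrum ℂ M := by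
  rw [spectrum.mem_iff]
  intro hU
  rw [Matrix.isUnit_iff_isUnit_det, isUnit_iff_ne_zero] at hU
  apply hU
  rw [← Matrix.exists_mulVec_eq_zero_iff]
  refine ⟨v, hv, ?_⟩
  rw [Matrix.sub_mulVec, h, Algebra.algebraMap_eq_smul_one, Matrix.smul_mulVec,
    Matrix.one_mulVec, sub_self]

lemma spec_eigen {M : Matrix (Fin 8) (Fin 8) ℂ} {μ : ℂ} (h : μ ∈ spectrum ℂ M) :
    ∃ v, v ≠ 0 ∧ M *ᵥ v = μ • v := by
  rw [spectrum.mem_iff, Matrix.isUnit_iff_isUnit_det, isUnit_iff_ne_zero, not_ne_iff,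
    ← Matrix.exists_mulVec_eq_zero_iff] at h
  obtain ⟨v, hv, hv2⟩ := h
  refine ⟨v, hv, ?_⟩
  rw [Matrix.sub_mulVec, Algebra.algebraMap_eq_smul_one, Matrix.smul_mulVec,
    Matrix.one_mulVec, sub_eq_zero] at hv2
  exact hv2.symm

lemma pair_det {u p q x y : ℂ} (h1 : u * x = p * y) (h2 : u * y = q * x)
    (hxy : ¬(x = 0 ∧ y = 0)) : u ^ 2 = p * q := by
  rcases not_and_or.1 hxy with hx | hy
  · have : u ^ 2 * x = p * q * x := by linear_combination u * h1 + p * h2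
    exact mul_right_cancel₀ hx this
  · have : u ^ 2 * y = p * q * y := by linear_combination u * h2 + q * h1
    exact mul_right_cancel₀ hy this

lemma re_sq_eq (w : ℂ) : w.re ^ 2 = (Complex.normSq w + (w ^ 2).re) / 2 := by
  simp [Complex.normSq_apply, pow_two, Complex.mul_re]

lemma normSq_pow_two (w : ℂ) : Complex.normSq (w ^ 2) = (Complex.normSq w) ^ 2 := by
  rw [pow_two, pow_two, Complex.normSq_mul]

lemma sqrt_quarter (x : ℝ) (hx : 0 ≤ x) : Real.sqrt (x / 4) = Real.sqrt x / 2 := by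
  rw [Real.sqrt_div hx, show Real.sqrt 4 = 2 by
    rw [show (4:ℝ) = 2^2 by norm_num, Real.sqrt_sq (by norm_num)]]

lemma target_eq (ε g C : ℝ) (hε : 0 ≤ ε) (hg : 0 ≤ g) (hC : 0 ≤ C) :
    (1/2) * Real.sqrt (ε^2/2 + ε*g*C + Real.sqrt (ε^4/4 + ε^2*g^2 + ε^3*g*C))
      = Real.sqrt ((Real.sqrt ((ε/2)^4 + 2*(ε/2)^3*g*C + (ε/2)^2*g^2) + ((ε/2)^2 + (ε/2)*g*C)) / 2) := by
  have hQ' : (0:ℝ) ≤ ε^4/4 + ε^2*g^2 + ε^3*g*C := by positivity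
  have h1 : (ε/2)^4 + 2*(ε/2)^3*g*C + (ε/2)^2*g^2 = (ε^4/4 + ε^2*g^2 + ε^3*g*C)/4 := by ring
  rw [h1, sqrt_quarter _ hQ']
  have h2 : (Real.sqrt (ε^4/4 + ε^2*g^2 + ε^3*g*C) / 2 + ((ε/2)^2 + (ε/2)*g*C)) / 2
      = (ε^2/2 + ε*g*C + Real.sqrt (ε^4/4 + ε^2*g^2 + ε^3*g*C)) / 4 := by ring
  rw [h2, sqrt_quarter _ (by positivity)]
  ring

end DualNopaAux

set_option maxHeartbeats 2000000 in
theorem stmt13 (γ κ ε α : ℝ) (hγ : 0 < γ) (hκ : 0 ≤ κ) (hε : 0 ≤ ε)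
    (hα₁ : 0 ≤ α) (hα₂ : α ≤ 1) (θ₁ θ₂ : ℝ) :
    IsGreatest
      {x : ℝ | ∃ μ ∈ spectrum ℂ ((dualNopaDrift γ κ ε α θ₁ θ₂).map (Complex.ofReal)),
        x = μ.re}
      (-(γ + κ)/2 + (1/2) * Real.sqrt (ε ^ 2 / 2
        + α * ε * γ * |Real.cos ((θ₁ - θ₂)/2)|
        + Real.sqrt (ε ^ 4 / 4 + α ^ 2 * ε ^ 2 * γ ^ 2
            + α * ε ^ 3 * γ * |Real.cos ((θ₁ - θ₂)/2)|))) := by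
  classical
  set C := |Real.cos ((θ₁ - θ₂)/2)| with hCdef
  have hC0 : 0 ≤ C := abs_nonneg _
  have hg0 : 0 ≤ α*γ := by positivity
  set Qb := (ε/2)^4 + 2*(ε/2)^3*(α*γ)*C + (ε/2)^2*(α*γ)^2 with hQbdef
  have hQb0 : 0 ≤ Qb := by rw [hQbdef]; positivity
  have hCsq : C^2 = Real.cos ((θ₁-θ₂)/2)^2 := sq_abs _
  have hsinsq : Real.sin ((θ₁-θ₂)/2)^2 = 1 - Real.cos ((θ₁-θ₂)/2)^2 := by
    linear_combination Real.sin_sq_add_cos_sq ((θ₁-θ₂)/2)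
  have hTgt : -(γ + κ)/2 + (1/2) * Real.sqrt (ε ^ 2 / 2 + α * ε * γ * C
        + Real.sqrt (ε ^ 4 / 4 + α ^ 2 * ε ^ 2 * γ ^ 2 + α * ε ^ 3 * γ * C))
      = -(γ + κ)/2 + Real.sqrt ((Real.sqrt Qb + ((ε/2)^2 + (ε/2)*(α*γ)*C)) / 2) := by
    rw [show ε ^ 4 / 4 + α ^ 2 * ε ^ 2 * γ ^ 2 + α * ε ^ 3 * γ * C
        = ε^4/4 + ε^2*(α*γ)^2 + ε^3*(α*γ)*C by ring,
      show ε ^ 2 / 2 + α * ε * γ * C = ε^2/2 + ε*(α*γ)*C by ring,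
      DualNopaAux.target_eq ε (α*γ) C hε hg0 hC0, hQbdef]
  constructor
  · -- MEMBERSHIP
    rcases eq_or_lt_of_le hε with hε0 | hεp
    · -- ε = 0 case
      refine ⟨((-(γ+κ)/2 : ℝ) : ℂ), ?_, ?_⟩
      · apply DualNopaAux.mem_spec (![0,0,1,0,0,0,0,0])
        · intro h
          have h2 := congrFun h 2
          simp at h2
        · funext j
          fin_cases j <;>
            simp [dualNopaDrift, Matrix.mulVec, dotProduct, Fin.sum_univ_eight,
              Matrix.map_apply, ← hε0]
      · rw [hTgt]
        rw [hQbdef, ← hε0]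
        norm_num
    · -- ε > 0 case
      set τ : ℝ := if 0 ≤ Real.cos ((θ₁ - θ₂)/2) then 1 else (-1) with hτdef
      have hτc : τ * Real.cos ((θ₁ - θ₂)/2) = C := by
        rw [hτdef, hCdef]
        split_ifs with h
        · rw [_root_.abs_of_nonneg h]; ring
        · rw [_root_.abs_of_neg (lt_of_not_ge h)]; ring
      have hτ2 : τ^2 = 1 := by rw [hτdef]; split_ifs <;> norm_num
      have hτ2c : ((τ:ℝ) : ℂ)^2 = 1 := by exact_mod_cast congrArg (Complex.ofReal) hτ2
      set D := Complex.exp ((((θ₁-θ₂)/2 : ℝ) : ℂ) * Complex.I) with hDdef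
      set P := Complex.exp ((((θ₁+θ₂)/2 : ℝ) : ℂ) * Complex.I) with hPdef
      have hm2 : (Complex.cos (θ₂:ℂ) - Complex.sin (θ₂:ℂ) * Complex.I) * P = D := by
        have h1 : (Complex.cos (θ₂:ℂ) - Complex.sin (θ₂:ℂ) * Complex.I)
            = Complex.exp (-(θ₂:ℂ) * Complex.I) := by
          rw [Complex.exp_mul_I, Complex.cos_neg, Complex.sin_neg]; ring
        rw [h1, hPdef, hDdef, ← Complex.exp_add]
        congr 1
        push_cast
        ring
      have hp1 : Complex.cos (θ₁:ℂ) + Complex.sin (θ₁:ℂ) * Complex.I = P * D := by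
        rw [hPdef, hDdef, ← Complex.exp_add, ← Complex.exp_mul_I]
        congr 1
        push_cast
        ring
      set z : ℂ := (((ε/2)^2 : ℝ) : ℂ) + (((ε/2)*(α*γ)*τ : ℝ) : ℂ) * D with hzdef
      have hDre : D.re = Real.cos ((θ₁-θ₂)/2) := by
        rw [hDdef]; exact Complex.exp_ofReal_mul_I_re _
      have hDim : D.im = Real.sin ((θ₁-θ₂)/2) := by
        rw [hDdef]; exact Complex.exp_ofReal_mul_I_im _
      have hzre : z.re = (ε/2)^2 + (ε/2)*(α*γ)*C := by
        rw [hzdef, Complex.add_re, Complex.ofReal_re, Complex.re_ofReal_mul, hDre]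
        linear_combination ((ε/2)*(α*γ))*hτc
      have hzim : z.im = (ε/2)*(α*γ)*τ*Real.sin ((θ₁-θ₂)/2) := by
        rw [hzdef, Complex.add_im, Complex.ofReal_im, Complex.im_ofReal_mul, hDim]
        ring
      have hzns : Complex.normSq z = Qb := by
        rw [Complex.normSq_apply, ← pow_two, ← pow_two, hzre, hzim, hQbdef]
        linear_combination (((ε/2)*(α*γ)*Real.sin ((θ₁-θ₂)/2))^2) * hτ2
          + ((ε/2)*(α*γ))^2 * hsinsq + (((ε/2)*(α*γ))^2) * hCsq
      obtain ⟨w0, hw0⟩ := IsAlgClosed.exists_pow_nat_eq z (n := 2) (by norm_num)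
      set w : ℂ := if 0 ≤ w0.re then w0 else -w0 with hwdef
      have hw : w^2 = z := by
        rw [hwdef]
        split_ifs
        · exact hw0
        · rw [neg_pow]; simpa using hw0
      have hwre0 : 0 ≤ w.re := by
        rw [hwdef]
        split_ifs with h
        · exact h
        · simp only [Complex.neg_re]
          linarith [lt_of_not_ge h]
      have hnsw : Complex.normSq w = Real.sqrt Qb := by
        have h1 : (Complex.normSq w)^2 = Qb := by
          rw [← DualNopaAux.normSq_pow_two, hw, hzns]
        rw [← h1, Real.sqrt_sq (Complex.normSq_nonneg w)]
      have hwre : w.re = Real.sqrt ((Real.sqrt Qb + ((ε/2)^2 + (ε/2)*(α*γ)*C))/2) := by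
        rw [← Real.sqrt_sq hwre0, DualNopaAux.re_sq_eq w, hw, hnsw, hzre]
      have hwc : w^2 = ((ε:ℂ)/2)^2 + (ε:ℂ)/2 * ((α:ℂ)*(γ:ℂ)) * ((τ:ℝ):ℂ) * D := by
        rw [hw, hzdef]
        push_cast
        ring
      refine ⟨w - (((γ+κ)/2 : ℝ) : ℂ), ?_, ?_⟩
      · apply DualNopaAux.mem_spec
          (![(ε:ℂ)/2, -Complex.I*((ε:ℂ)/2), w, Complex.I*w,
             w*(-(((τ:ℝ):ℂ))*P), -Complex.I*(w*(-(((τ:ℝ):ℂ))*P)),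
             (ε:ℂ)/2*(-(((τ:ℝ):ℂ))*P), Complex.I*((ε:ℂ)/2*(-(((τ:ℝ):ℂ))*P))])
        · intro h
          have h0 := congrFun h 0
          simp at h0
          exact hεp.ne' h0
        · funext j
          fin_cases j
          · simp [dualNopaDrift, Matrix.mulVec, dotProduct, Fin.sum_univ_eight,
              Matrix.map_apply]
            push_cast
            linear_combination (norm := (ring_nf; try simp only [Complex.I_sq]; try ring_nf))
          · simp [dualNopaDrift, Matrix.mulVec, dotProduct, Fin.sum_univ_eight,
              Matrix.map_apply]
            push_cast
            linear_combination (norm := (ring_nf; try simp only [Complex.I_sq]; try ring_nf))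
          · simp [dualNopaDrift, Matrix.mulVec, dotProduct, Fin.sum_univ_eight,
              Matrix.map_apply]
            push_cast
            linear_combination (norm := (ring_nf; try simp only [Complex.I_sq]; try ring_nf)) (-1 : ℂ)*hwc + ((ε:ℂ)/2*((α:ℂ)*(γ:ℂ))*((τ:ℝ):ℂ))*hm2
          · simp [dualNopaDrift, Matrix.mulVec, dotProduct, Fin.sum_univ_eight,
              Matrix.map_apply]
            push_cast
            linear_combination (norm := (ring_nf; try simp only [Complex.I_sq]; try ring_nf)) (-Complex.I)*hwc + (Complex.I*((ε:ℂ)/2)*((α:ℂ)*(γ:ℂ))*((τ:ℝ):ℂ))*hm2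
          · simp [dualNopaDrift, Matrix.mulVec, dotProduct, Fin.sum_univ_eight,
              Matrix.map_apply]
            push_cast
            linear_combination (norm := (ring_nf; try simp only [Complex.I_sq]; try ring_nf)) (((τ:ℝ):ℂ)*P)*hwc + (-((ε:ℂ)/2)*((α:ℂ)*(γ:ℂ)))*hp1 + (((ε:ℂ)/2)*((α:ℂ)*(γ:ℂ))*D*P)*hτ2c
          · simp [dualNopaDrift, Matrix.mulVec, dotProduct, Fin.sum_univ_eight,
              Matrix.map_apply]
            push_cast
            linear_combination (norm := (ring_nf; try simp only [Complex.I_sq]; try ring_nf)) (-Complex.I*((τ:ℝ):ℂ)*P)*hwc + (Complex.I*((ε:ℂ)/2)*((α:ℂ)*(γ:ℂ)))*hp1 + (-Complex.I*((ε:ℂ)/2)*((α:ℂ)*(γ:ℂ))*D*P)*hτ2c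
          · simp [dualNopaDrift, Matrix.mulVec, dotProduct, Fin.sum_univ_eight,
              Matrix.map_apply]
            push_cast
            linear_combination (norm := (ring_nf; try simp only [Complex.I_sq]; try ring_nf))
          · simp [dualNopaDrift, Matrix.mulVec, dotProduct, Fin.sum_univ_eight,
              Matrix.map_apply]
            push_cast
            linear_combination (norm := (ring_nf; try simp only [Complex.I_sq]; try ring_nf))
      · rw [hTgt, Complex.sub_re, Complex.ofReal_re, hwre]
        ring
  · -- UPPER BOUND
    rintro x ⟨μ, hμ, rfl⟩
    rw [hTgt]
    obtain ⟨v, hv0, hAv⟩ := DualNopaAux.spec_eigen hμ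
    have e0 := congrFun hAv 0
    have e1 := congrFun hAv 1
    have e2 := congrFun hAv 2
    have e3 := congrFun hAv 3
    have e4 := congrFun hAv 4
    have e5 := congrFun hAv 5
    have e6 := congrFun hAv 6
    have e7 := congrFun hAv 7
    simp [dualNopaDrift, Matrix.mulVec, dotProduct, Fin.sum_univ_eight,
      Matrix.map_apply] at e0 e1 e2 e3 e4 e5 e6 e7
    push_cast at e0 e1 e2 e3 e4 e5 e6 e7
    set lc : ℂ := μ + ((γ:ℂ)+(κ:ℂ))/2 with hlc
    have rel1 : lc * (v 0 + Complex.I*v 1) = (ε:ℂ)/2 * (v 2 - Complex.I*v 3) := by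
      rw [hlc]; linear_combination (norm := (ring_nf; try simp only [Complex.I_sq]; try ring_nf)) -e0 - Complex.I*e1
    have rel2 : lc * (v 2 - Complex.I*v 3) = (ε:ℂ)/2 * (v 0 + Complex.I*v 1)
        + (-((α:ℂ)*(γ:ℂ))*(Complex.cos (θ₂:ℂ) - Complex.sin (θ₂:ℂ) * Complex.I)) * (v 6 - Complex.I*v 7) := by
      rw [hlc]; linear_combination (norm := (ring_nf; try simp only [Complex.I_sq]; try ring_nf)) -e2 + Complex.I*e3
    have rel3 : lc * (v 4 + Complex.I*v 5) = (-((α:ℂ)*(γ:ℂ))*(Complex.cos (θ₁:ℂ) + Complex.sin (θ₁:ℂ) * Complex.I)) * (v 0 + Complex.I*v 1)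
        + (ε:ℂ)/2 * (v 6 - Complex.I*v 7) := by
      rw [hlc]; linear_combination (norm := (ring_nf; try simp only [Complex.I_sq]; try ring_nf)) -e4 - Complex.I*e5
    have rel4 : lc * (v 6 - Complex.I*v 7) = (ε:ℂ)/2 * (v 4 + Complex.I*v 5) := by
      rw [hlc]; linear_combination (norm := (ring_nf; try simp only [Complex.I_sq]; try ring_nf)) -e6 + Complex.I*e7
    have rel5 : lc * (v 0 - Complex.I*v 1) = (ε:ℂ)/2 * (v 2 + Complex.I*v 3) := by
      rw [hlc]; linear_combination (norm := (ring_nf; try simp only [Complex.I_sq]; try ring_nf)) -e0 + Complex.I*e1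
    have rel6 : lc * (v 2 + Complex.I*v 3) = (ε:ℂ)/2 * (v 0 - Complex.I*v 1)
        + (-((α:ℂ)*(γ:ℂ))*(Complex.cos (θ₂:ℂ) + Complex.sin (θ₂:ℂ) * Complex.I)) * (v 6 + Complex.I*v 7) := by
      rw [hlc]; linear_combination (norm := (ring_nf; try simp only [Complex.I_sq]; try ring_nf)) -e2 - Complex.I*e3
    have rel7 : lc * (v 4 - Complex.I*v 5) = (-((α:ℂ)*(γ:ℂ))*(Complex.cos (θ₁:ℂ) - Complex.sin (θ₁:ℂ) * Complex.I)) * (v 0 - Complex.I*v 1)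
        + (ε:ℂ)/2 * (v 6 + Complex.I*v 7) := by
      rw [hlc]; linear_combination (norm := (ring_nf; try simp only [Complex.I_sq]; try ring_nf)) -e4 + Complex.I*e5
    have rel8 : lc * (v 6 + Complex.I*v 7) = (ε:ℂ)/2 * (v 4 - Complex.I*v 5) := by
      rw [hlc]; linear_combination (norm := (ring_nf; try simp only [Complex.I_sq]; try ring_nf)) -e6 - Complex.I*e7
    set u : ℂ := lc^2 - ((ε:ℂ)/2)^2 with hu
    have Q1 : u * (v 0 + Complex.I*v 1) = ((ε:ℂ)/2 * (-((α:ℂ)*(γ:ℂ))*(Complex.cos (θ₂:ℂ) - Complex.sin (θ₂:ℂ) * Complex.I))) * (v 6 - Complex.I*v 7) := by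
      linear_combination (norm := (ring_nf; try simp only [Complex.I_sq]; try ring_nf)) lc*rel1 + (ε:ℂ)/2*rel2 + (v 0 + Complex.I*v 1)*hu
    have Q2 : u * (v 6 - Complex.I*v 7) = ((ε:ℂ)/2 * (-((α:ℂ)*(γ:ℂ))*(Complex.cos (θ₁:ℂ) + Complex.sin (θ₁:ℂ) * Complex.I))) * (v 0 + Complex.I*v 1) := by
      linear_combination (norm := (ring_nf; try simp only [Complex.I_sq]; try ring_nf)) lc*rel4 + (ε:ℂ)/2*rel3 + (v 6 - Complex.I*v 7)*hu
    have Q3 : u * (v 2 - Complex.I*v 3) = ((ε:ℂ)/2 * (-((α:ℂ)*(γ:ℂ))*(Complex.cos (θ₂:ℂ) - Complex.sin (θ₂:ℂ) * Complex.I))) * (v 4 + Complex.I*v 5) := by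
      linear_combination (norm := (ring_nf; try simp only [Complex.I_sq]; try ring_nf)) lc*rel2 + (ε:ℂ)/2*rel1
        + (-((α:ℂ)*(γ:ℂ))*(Complex.cos (θ₂:ℂ) - Complex.sin (θ₂:ℂ) * Complex.I))*rel4
        + (v 2 - Complex.I*v 3)*hu
    have Q4 : u * (v 4 + Complex.I*v 5) = ((ε:ℂ)/2 * (-((α:ℂ)*(γ:ℂ))*(Complex.cos (θ₁:ℂ) + Complex.sin (θ₁:ℂ) * Complex.I))) * (v 2 - Complex.I*v 3) := by
      linear_combination (norm := (ring_nf; try simp only [Complex.I_sq]; try ring_nf)) lc*rel3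
        + (-((α:ℂ)*(γ:ℂ))*(Complex.cos (θ₁:ℂ) + Complex.sin (θ₁:ℂ) * Complex.I))*rel1
        + (ε:ℂ)/2*rel4 + (v 4 + Complex.I*v 5)*hu
    have Q5 : u * (v 0 - Complex.I*v 1) = ((ε:ℂ)/2 * (-((α:ℂ)*(γ:ℂ))*(Complex.cos (θ₂:ℂ) + Complex.sin (θ₂:ℂ) * Complex.I))) * (v 6 + Complex.I*v 7) := by
      linear_combination (norm := (ring_nf; try simp only [Complex.I_sq]; try ring_nf)) lc*rel5 + (ε:ℂ)/2*rel6 + (v 0 - Complex.I*v 1)*hu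
    have Q6 : u * (v 6 + Complex.I*v 7) = ((ε:ℂ)/2 * (-((α:ℂ)*(γ:ℂ))*(Complex.cos (θ₁:ℂ) - Complex.sin (θ₁:ℂ) * Complex.I))) * (v 0 - Complex.I*v 1) := by
      linear_combination (norm := (ring_nf; try simp only [Complex.I_sq]; try ring_nf)) lc*rel8 + (ε:ℂ)/2*rel7 + (v 6 + Complex.I*v 7)*hu
    have Q7 : u * (v 2 + Complex.I*v 3) = ((ε:ℂ)/2 * (-((α:ℂ)*(γ:ℂ))*(Complex.cos (θ₂:ℂ) + Complex.sin (θ₂:ℂ) * Complex.I))) * (v 4 - Complex.I*v 5) := by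
      linear_combination (norm := (ring_nf; try simp only [Complex.I_sq]; try ring_nf)) lc*rel6 + (ε:ℂ)/2*rel5
        + (-((α:ℂ)*(γ:ℂ))*(Complex.cos (θ₂:ℂ) + Complex.sin (θ₂:ℂ) * Complex.I))*rel8
        + (v 2 + Complex.I*v 3)*hu
    have Q8 : u * (v 4 - Complex.I*v 5) = ((ε:ℂ)/2 * (-((α:ℂ)*(γ:ℂ))*(Complex.cos (θ₁:ℂ) - Complex.sin (θ₁:ℂ) * Complex.I))) * (v 2 + Complex.I*v 3) := by
      linear_combination (norm := (ring_nf; try simp only [Complex.I_sq]; try ring_nf)) lc*rel7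
        + (-((α:ℂ)*(γ:ℂ))*(Complex.cos (θ₁:ℂ) - Complex.sin (θ₁:ℂ) * Complex.I))*rel5
        + (ε:ℂ)/2*rel8 + (v 4 - Complex.I*v 5)*hu
    set K := (ε/2)*(α*γ) with hK
    have hK0 : 0 ≤ K := by rw [hK]; positivity
    have hu2 : u^2 = ((K^2 * Real.cos (θ₁ - θ₂) : ℝ) : ℂ) + ((K^2 * Real.sin (θ₁ - θ₂) : ℝ) : ℂ) * Complex.I
        ∨ u^2 = ((K^2 * Real.cos (θ₁ - θ₂) : ℝ) : ℂ) - ((K^2 * Real.sin (θ₁ - θ₂) : ℝ) : ℂ) * Complex.I := by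
      by_cases c1 : (v 0 + Complex.I*v 1) = 0 ∧ (v 6 - Complex.I*v 7) = 0
      · by_cases c2 : (v 2 - Complex.I*v 3) = 0 ∧ (v 4 + Complex.I*v 5) = 0
        · by_cases c3 : (v 0 - Complex.I*v 1) = 0 ∧ (v 6 + Complex.I*v 7) = 0
          · by_cases c4 : (v 2 + Complex.I*v 3) = 0 ∧ (v 4 - Complex.I*v 5) = 0
            · exfalso
              apply hv0
              funext j
              fin_cases j <;> simp only [Pi.zero_apply]
              · show v 0 = 0
                linear_combination (norm := (ring_nf; try simp only [Complex.I_sq]; try ring_nf)) (1/2 : ℂ)*c1.1 + (1/2 : ℂ)*c3.1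
              · show v 1 = 0
                linear_combination (norm := (ring_nf; try simp only [Complex.I_sq]; try ring_nf)) (-Complex.I/2)*c1.1 + (Complex.I/2)*c3.1
              · show v 2 = 0
                linear_combination (norm := (ring_nf; try simp only [Complex.I_sq]; try ring_nf)) (1/2 : ℂ)*c4.1 + (1/2 : ℂ)*c2.1
              · show v 3 = 0
                linear_combination (norm := (ring_nf; try simp only [Complex.I_sq]; try ring_nf)) (-Complex.I/2)*c4.1 + (Complex.I/2)*c2.1
              · show v 4 = 0
                linear_combination (norm := (ring_nf; try simp only [Complex.I_sq]; try ring_nf)) (1/2 : ℂ)*c2.2 + (1/2 : ℂ)*c4.2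
              · show v 5 = 0
                linear_combination (norm := (ring_nf; try simp only [Complex.I_sq]; try ring_nf)) (-Complex.I/2)*c2.2 + (Complex.I/2)*c4.2
              · show v 6 = 0
                linear_combination (norm := (ring_nf; try simp only [Complex.I_sq]; try ring_nf)) (1/2 : ℂ)*c3.2 + (1/2 : ℂ)*c1.2
              · show v 7 = 0
                linear_combination (norm := (ring_nf; try simp only [Complex.I_sq]; try ring_nf)) (-Complex.I/2)*c3.2 + (Complex.I/2)*c1.2
            · refine Or.inr ?_
              rw [DualNopaAux.pair_det Q7 Q8 c4]
              rw [hK]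
              push_cast
              rw [Complex.cos_sub, Complex.sin_sub]
              ring_nf
              simp only [Complex.I_sq]
              ring_nf
          · refine Or.inr ?_
            rw [DualNopaAux.pair_det Q5 Q6 c3]
            rw [hK]
            push_cast
            rw [Complex.cos_sub, Complex.sin_sub]
            ring_nf
            simp only [Complex.I_sq]
            ring_nf
        · refine Or.inl ?_
          rw [DualNopaAux.pair_det Q3 Q4 c2]
          rw [hK]
          push_cast
          rw [Complex.cos_sub, Complex.sin_sub]
          ring_nf
          simp only [Complex.I_sq]
          ring_nf
      · refine Or.inl ?_
        rw [DualNopaAux.pair_det Q1 Q2 c1]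
        rw [hK]
        push_cast
        rw [Complex.cos_sub, Complex.sin_sub]
        ring_nf
        simp only [Complex.I_sq]
        ring_nf
    have hure : (u^2).re = K^2 * Real.cos (θ₁ - θ₂) := by
      rcases hu2 with h | h <;>
        rw [h] <;>
        simp only [Complex.add_re, Complex.sub_re, Complex.mul_re, Complex.ofReal_re,
          Complex.ofReal_im, Complex.I_re, Complex.I_im] <;>
        ring
    have hns2 : Complex.normSq (u^2) = (K^2)^2 := by
      have hpyth := Real.sin_sq_add_cos_sq (θ₁ - θ₂)
      rcases hu2 with h | h
      · rw [h, Complex.normSq_add_mul_I]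
        linear_combination (K^2)^2 * hpyth
      · have h' : u^2 = ((K^2 * Real.cos (θ₁ - θ₂) : ℝ) : ℂ) + ((-(K^2 * Real.sin (θ₁ - θ₂)) : ℝ) : ℂ) * Complex.I := by
          rw [h]; push_cast; ring
        rw [h', Complex.normSq_add_mul_I]
        linear_combination (K^2)^2 * hpyth
    have hnsu : Complex.normSq u = K^2 := by
      have h1 : (Complex.normSq u)^2 = (K^2)^2 := by
        rw [← DualNopaAux.normSq_pow_two, hns2]
      rw [← Real.sqrt_sq (Complex.normSq_nonneg u), h1, Real.sqrt_sq (sq_nonneg K)]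
    have hure2 : u.re^2 = (K*C)^2 := by
      have h1 := DualNopaAux.re_sq_eq u
      rw [hnsu, hure] at h1
      rw [h1]
      have hch : Real.cos ((θ₁ - θ₂)/2)^2 = 1/2 + Real.cos (θ₁ - θ₂)/2 := by
        rw [show θ₁ - θ₂ = 2*((θ₁ - θ₂)/2) by ring, Real.cos_sq]
        ring_nf
      linear_combination (-(K^2)) * hCsq + (-(K^2)) * hch
    have hureC : u.re ≤ K*C := by
      have habs : |u.re| = K*C := by
        rw [← Real.sqrt_sq_eq_abs, hure2, Real.sqrt_sq (by positivity)]
      linarith [le_abs_self u.re]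
    have hcomb : lc^2 = (((ε/2)^2 : ℝ) : ℂ) + u := by rw [hu]; push_cast; ring
    have hl2re : (lc^2).re = (ε/2)^2 + u.re := by
      rw [hcomb]
      simp only [Complex.add_re, Complex.ofReal_re]
    have hl2im : (lc^2).im = u.im := by
      rw [hcomb]
      simp only [Complex.add_im, Complex.ofReal_im, zero_add]
    have huim2 : u.im^2 = K^2 - u.re^2 := by
      have h := Complex.normSq_apply u
      rw [hnsu] at h
      linear_combination -h
    have hnsl : Complex.normSq lc ≤ Real.sqrt Qb := by
      have h1 : (Complex.normSq lc)^2 = Complex.normSq (lc^2) :=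
        (DualNopaAux.normSq_pow_two lc).symm
      have h2 : Complex.normSq (lc^2) = ((ε/2)^2 + u.re)^2 + u.im^2 := by
        rw [Complex.normSq_apply, ← pow_two, ← pow_two, hl2re, hl2im]
      have h3 : (Complex.normSq lc)^2 ≤ Qb := by
        rw [h1, h2, hQbdef]
        have hKC : (ε/2)^2 * u.re ≤ (ε/2)^2 * (K*C) :=
          mul_le_mul_of_nonneg_left hureC (by positivity)
        have hexp : ((ε/2)^2 + u.re)^2 + u.im^2 = (ε/2)^4 + 2*(ε/2)^2*u.re + K^2 := by
          linear_combination huim2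
        have eK1 : K^2 = (ε/2)^2*(α*γ)^2 := by rw [hK]; ring
        have eK2 : (ε/2)^2*(K*C) = (ε/2)^3*(α*γ)*C := by rw [hK]; ring
        rw [hexp]
        linarith [hKC]
      have hsq : (Complex.normSq lc)^2 ≤ (Real.sqrt Qb)^2 := by
        rw [Real.sq_sqrt hQb0]; exact h3
      calc Complex.normSq lc = Real.sqrt ((Complex.normSq lc)^2) :=
            (Real.sqrt_sq (Complex.normSq_nonneg lc)).symm
        _ ≤ Real.sqrt ((Real.sqrt Qb)^2) := Real.sqrt_le_sqrt hsq
        _ = Real.sqrt Qb := Real.sqrt_sq (Real.sqrt_nonneg _)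
    have hlre2 : lc.re^2 ≤ (Real.sqrt Qb + ((ε/2)^2 + (ε/2)*(α*γ)*C))/2 := by
      have h1 := DualNopaAux.re_sq_eq lc
      rw [hl2re] at h1
      have hKCeq : K*C = (ε/2)*(α*γ)*C := by rw [hK]
      linarith [hnsl, hureC]
    have hlre : lc.re ≤ Real.sqrt ((Real.sqrt Qb + ((ε/2)^2 + (ε/2)*(α*γ)*C))/2) := by
      calc lc.re ≤ |lc.re| := le_abs_self _
        _ = Real.sqrt (lc.re^2) := (Real.sqrt_sq_eq_abs _).symm
        _ ≤ _ := Real.sqrt_le_sqrt hlre2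
    have hμre : μ.re = lc.re - (γ+κ)/2 := by
      rw [hlc]
      simp
    linarith [hlre, hμre]
end

section
/- Let γ_r > 0, 0 < x, y ≤ 1, κ ≥ 0, 0 ≤ α ≤ 1, and Δθ ∈ ℝ. Set ε = xγ_r and γ = γ_r/y. Then −(γ+κ)/2 + (1/2)(ε²/2 + αεγ|cos(Δθ/2)| + √(ε⁴/4 + α²ε²γ² + αε³γ|cos(Δθ/2)|))^{1/2} < 0 if and only if x·y < (1 + yκ/γ_r)² / (√((1 + yκ/γ_r)² + α²) + α|cos(Δθ/2)|). -/
set_option maxHeartbeats 1000000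

theorem stmt14 (γr x y κ α Δθ : ℝ) (hγr : 0 < γr)
    (hx₁ : 0 < x) (hx₂ : x ≤ 1) (hy₁ : 0 < y) (hy₂ : y ≤ 1)
    (hκ : 0 ≤ κ) (hα₁ : 0 ≤ α) (hα₂ : α ≤ 1)
    (ε γ : ℝ) (hε : ε = x * γr) (hγ : γ = γr / y) :
    (-(γ + κ)/2 + (1/2) * Real.sqrt (ε ^ 2 / 2
        + α * ε * γ * |Real.cos (Δθ / 2)|
        + Real.sqrt (ε ^ 4 / 4 + α ^ 2 * ε ^ 2 * γ ^ 2
            + α * ε ^ 3 * γ * |Real.cos (Δθ / 2)|)) < 0) ↔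
    x * y < (1 + y * κ / γr) ^ 2 /
      (Real.sqrt ((1 + y * κ / γr) ^ 2 + α ^ 2) + α * |Real.cos (Δθ / 2)|) := by
  have hεpos : 0 < ε := by rw [hε]; exact mul_pos hx₁ hγr
  have hγpos : 0 < γ := by rw [hγ]; exact div_pos hγr hy₁
  have hγκ : 0 < γ + κ := by linarith
  have hγκB : γ + κ = γ * (1 + y * κ / γr) := by
    rw [hγ]; field_simp
  have hεt : ε = (x * y) * γ := by
    rw [hε, hγ]; field_simp
  have hBpos : 0 < 1 + y * κ / γr := by positivity
  generalize hc : |Real.cos (Δθ / 2)| = c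
  have hc0 : 0 ≤ c := hc ▸ abs_nonneg _
  have hc1 : c ≤ 1 := hc ▸ Real.abs_cos_le_one _
  obtain ⟨B, hB⟩ : ∃ B, 1 + y * κ / γr = B := ⟨_, rfl⟩
  rw [hB] at hγκB hBpos ⊢
  obtain ⟨t, ht⟩ : ∃ t, x * y = t := ⟨_, rfl⟩
  rw [ht] at hεt ⊢
  have htpos : 0 < t := ht ▸ mul_pos hx₁ hy₁
  obtain ⟨s, hs⟩ : ∃ s, Real.sqrt (B ^ 2 + α ^ 2) = s := ⟨_, rfl⟩
  rw [hs]
  have hs0 : 0 ≤ s := hs ▸ Real.sqrt_nonneg _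
  have hs2 : s ^ 2 = B ^ 2 + α ^ 2 := by
    rw [← hs]; exact Real.sq_sqrt (by positivity)
  clear hε hγ hc hB ht hs hx₁ hx₂ hy₂ hγr hκ
  -- basic facts about s
  have hsB : B ≤ s := by nlinarith [sq_nonneg α, mul_pos hBpos hBpos]
  have hαs : α ≤ s := by nlinarith [mul_pos hBpos hBpos]
  have hsαc : α * c ≤ s := by nlinarith [mul_le_of_le_one_right hα₁ hc1]
  have hαc0 : 0 ≤ α * c := mul_nonneg hα₁ hc0
  have hD : 0 < s + α * c := by linarith [lt_of_lt_of_le hBpos hsB]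
  have hinner0 : 0 ≤ ε ^ 4 / 4 + α ^ 2 * ε ^ 2 * γ ^ 2 + α * ε ^ 3 * γ * c := by positivity
  have hsqinner : Real.sqrt (ε ^ 4 / 4 + α ^ 2 * ε ^ 2 * γ ^ 2 + α * ε ^ 3 * γ * c) ^ 2
      = ε ^ 4 / 4 + α ^ 2 * ε ^ 2 * γ ^ 2 + α * ε ^ 3 * γ * c := Real.sq_sqrt hinner0
  have hsqinner0 : 0 ≤ Real.sqrt (ε ^ 4 / 4 + α ^ 2 * ε ^ 2 * γ ^ 2 + α * ε ^ 3 * γ * c) :=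
    Real.sqrt_nonneg _
  -- factorization identity
  have hfact : (γ + κ) ^ 2 * ((γ + κ) ^ 2 - ε ^ 2 - 2 * α * ε * γ * c)
      - α ^ 2 * ε ^ 2 * γ ^ 2 * (1 - c ^ 2)
      = γ ^ 4 * ((B ^ 2 - t * (s + α * c)) * (B ^ 2 + t * (s - α * c))) := by
    rw [hγκB, hεt]
    linear_combination (γ ^ 4 * t ^ 2) * hs2
  have hF : 0 < B ^ 2 + t * (s - α * c) := by
    have h1 : 0 ≤ t * (s - α * c) := mul_nonneg htpos.le (by linarith)
    have h2 : 0 < B ^ 2 := pow_pos hBpos 2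
    linarith
  have hid : ((γ + κ) ^ 2 - ε ^ 2 / 2 - α * ε * γ * c) ^ 2
      - (ε ^ 4 / 4 + α ^ 2 * ε ^ 2 * γ ^ 2 + α * ε ^ 3 * γ * c)
      = (γ + κ) ^ 2 * ((γ + κ) ^ 2 - ε ^ 2 - 2 * α * ε * γ * c)
      - α ^ 2 * ε ^ 2 * γ ^ 2 * (1 - c ^ 2) := by ring
  rw [lt_div_iff₀ hD]
  constructor
  · intro h
    have hS : Real.sqrt (ε ^ 2 / 2 + α * ε * γ * c
        + Real.sqrt (ε ^ 4 / 4 + α ^ 2 * ε ^ 2 * γ ^ 2 + α * ε ^ 3 * γ * c)) < γ + κ := by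
      linarith
    have hS2 : ε ^ 2 / 2 + α * ε * γ * c
        + Real.sqrt (ε ^ 4 / 4 + α ^ 2 * ε ^ 2 * γ ^ 2 + α * ε ^ 3 * γ * c) < (γ + κ) ^ 2 :=
      (Real.sqrt_lt' hγκ).mp hS
    have hT : Real.sqrt (ε ^ 4 / 4 + α ^ 2 * ε ^ 2 * γ ^ 2 + α * ε ^ 3 * γ * c)
        < (γ + κ) ^ 2 - ε ^ 2 / 2 - α * ε * γ * c := by linarith
    have hTpos : 0 < (γ + κ) ^ 2 - ε ^ 2 / 2 - α * ε * γ * c :=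
      lt_of_le_of_lt hsqinner0 hT
    have hI : ε ^ 4 / 4 + α ^ 2 * ε ^ 2 * γ ^ 2 + α * ε ^ 3 * γ * c
        < ((γ + κ) ^ 2 - ε ^ 2 / 2 - α * ε * γ * c) ^ 2 := by
      calc ε ^ 4 / 4 + α ^ 2 * ε ^ 2 * γ ^ 2 + α * ε ^ 3 * γ * c
          = Real.sqrt (ε ^ 4 / 4 + α ^ 2 * ε ^ 2 * γ ^ 2 + α * ε ^ 3 * γ * c) ^ 2 :=
            hsqinner.symm
        _ < ((γ + κ) ^ 2 - ε ^ 2 / 2 - α * ε * γ * c) ^ 2 := by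
            apply pow_lt_pow_left₀ hT hsqinner0
            norm_num
    have hP : 0 < (γ + κ) ^ 2 * ((γ + κ) ^ 2 - ε ^ 2 - 2 * α * ε * γ * c)
        - α ^ 2 * ε ^ 2 * γ ^ 2 * (1 - c ^ 2) := by linarith [hid, hI]
    rw [hfact] at hP
    have hprod : 0 < (B ^ 2 - t * (s + α * c)) * (B ^ 2 + t * (s - α * c)) := by
      by_contra h'
      push_neg at h'
      have : γ ^ 4 * ((B ^ 2 - t * (s + α * c)) * (B ^ 2 + t * (s - α * c))) ≤ 0 :=
        mul_nonpos_of_nonneg_of_nonpos (by positivity) h'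
      linarith
    by_contra h'
    push_neg at h'
    have hnn : 0 ≤ (t * (s + α * c) - B ^ 2) * (B ^ 2 + t * (s - α * c)) :=
      mul_nonneg (by linarith) hF.le
    have hre : (B ^ 2 - t * (s + α * c)) * (B ^ 2 + t * (s - α * c))
        = -((t * (s + α * c) - B ^ 2) * (B ^ 2 + t * (s - α * c))) := by ring
    rw [hre] at hprod
    linarith
  · intro h
    have hprod : 0 < (B ^ 2 - t * (s + α * c)) * (B ^ 2 + t * (s - α * c)) :=
      mul_pos (by linarith) hF
    have hP : 0 < (γ + κ) ^ 2 * ((γ + κ) ^ 2 - ε ^ 2 - 2 * α * ε * γ * c)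
        - α ^ 2 * ε ^ 2 * γ ^ 2 * (1 - c ^ 2) := by
      rw [hfact]
      exact mul_pos (pow_pos hγpos 4) hprod
    have hc2 : 0 ≤ α ^ 2 * ε ^ 2 * γ ^ 2 * (1 - c ^ 2) := by
      apply mul_nonneg (by positivity)
      nlinarith
    have hA : 0 < (γ + κ) ^ 2 - ε ^ 2 - 2 * α * ε * γ * c := by
      by_contra h'
      push_neg at h'
      have : (γ + κ) ^ 2 * ((γ + κ) ^ 2 - ε ^ 2 - 2 * α * ε * γ * c) ≤ 0 :=
        mul_nonpos_of_nonneg_of_nonpos (sq_nonneg _) h'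
      linarith
    have hεγc : 0 ≤ α * ε * γ * c := by positivity
    have hTpos : 0 < (γ + κ) ^ 2 - ε ^ 2 / 2 - α * ε * γ * c := by
      have := sq_nonneg ε
      linarith
    have hI : ε ^ 4 / 4 + α ^ 2 * ε ^ 2 * γ ^ 2 + α * ε ^ 3 * γ * c
        < ((γ + κ) ^ 2 - ε ^ 2 / 2 - α * ε * γ * c) ^ 2 := by linarith [hid, hP]
    have hT : Real.sqrt (ε ^ 4 / 4 + α ^ 2 * ε ^ 2 * γ ^ 2 + α * ε ^ 3 * γ * c)
        < (γ + κ) ^ 2 - ε ^ 2 / 2 - α * ε * γ * c :=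
      (Real.sqrt_lt' hTpos).mpr hI
    have hS : Real.sqrt (ε ^ 2 / 2 + α * ε * γ * c
        + Real.sqrt (ε ^ 4 / 4 + α ^ 2 * ε ^ 2 * γ ^ 2 + α * ε ^ 3 * γ * c)) < γ + κ :=
      (Real.sqrt_lt' hγκ).mpr (by linarith)
    linarith
end
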